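/- With the notation below, the Artin element satisfies ρ(σ_{Γ,s}) = ρ_1^{s(1)} ρ_2^{s(2)} ⋯ ρ_n^{s(n)} = U⁻¹ Uᵀ. -/

import Mathlib

open Matrix

noncomputable section

/-- The strictly upper-triangular part `A⁺` of a matrix `A`. -/
def Aplus (n : ℕ) (A : Matrix (Fin n) (Fin n) ℝ) : Matrix (Fin n) (Fin n) ℝ :=
  fun i j => if i < j then A i j else 0

/-- `U = I_s − A⁺`. -/
def Umat (n : ℕ) (A : Matrix (Fin n) (Fin n) ℝ) (s : Fin n → ℝ) :
    Matrix (Fin n) (Fin n) ℝ :=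
  Matrix.diagonal s - Aplus n A

/-- The Artin generator `ρ_i`: it agrees with the identity except in row `i`,
where `(ρ_i)_{ii} = 1`, `(ρ_i)_{ij} = a_{ij}` for `i < j`, and
`(ρ_i)_{ij} = −a_{ij}` for `i > j`. -/
def artinGen (n : ℕ) (A : Matrix (Fin n) (Fin n) ℝ) (i : Fin n) :
    Matrix (Fin n) (Fin n) ℝ :=
  fun j k =>
    if j = i then (if k = i then 1 else if i < k then A i k else -A i k)
    else (if j = k then 1 else 0)

/-- `ρ_i^{s(i)}`, for `s(i) ∈ {+1, −1}`: the generator itself if `s(i) = 1`,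
and its matrix inverse if `s(i) = −1`. -/
def artinGenPow (n : ℕ) (A : Matrix (Fin n) (Fin n) ℝ) (s : Fin n → ℝ) (i : Fin n) :
    Matrix (Fin n) (Fin n) ℝ :=
  if s i = 1 then artinGen n A i else (artinGen n A i)⁻¹

namespace Stmt2Aux

variable (n : ℕ) (A : Matrix (Fin n) (Fin n) ℝ) (s : Fin n → ℝ)

/-- The off-diagonal row of a signed generator. -/
def rowFun (sg : ℝ) (i : Fin n) : Fin n → ℝ :=
  fun k => if k = i then 0 else if i < k then sg * A i k else -(sg * A i k)

/-- The rank-one correction matrix. -/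
def corr (sg : ℝ) (i : Fin n) : Matrix (Fin n) (Fin n) ℝ :=
  fun j k => if j = i then rowFun n A sg i k else 0

/-- The signed generator `ρ_i^{sg}`. -/
def genS (sg : ℝ) (i : Fin n) : Matrix (Fin n) (Fin n) ℝ :=
  1 + corr n A sg i

lemma artinGen_eq (i : Fin n) : artinGen n A i = genS n A 1 i := by
  ext j k
  simp only [artinGen, genS, corr, rowFun, Matrix.add_apply, Matrix.one_apply]
  by_cases hj : j = i
  · subst hj
    by_cases hk : k = j
    · subst hk; simp
    · have hjk : ¬ j = k := fun e => hk e.symm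
      by_cases h2 : j < k <;> simp [hk, hjk, h2]
  · simp [hj]

lemma corr_mul_corr (sg sg' : ℝ) (i : Fin n) :
    corr n A sg i * corr n A sg' i = 0 := by
  ext j k
  simp only [corr, Matrix.mul_apply, Matrix.zero_apply]
  rw [Finset.sum_eq_zero]
  intro l _
  by_cases hl : l = i
  · rw [hl]
    by_cases hj : j = i <;> simp [hj, rowFun]
  · simp [hl]

lemma genS_mul_genS (sg : ℝ) (i : Fin n) :
    genS n A sg i * genS n A (-sg) i = 1 := by
  have hc : corr n A sg i + corr n A (-sg) i = 0 := by
    ext j k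
    by_cases hj : j = i <;> by_cases hk : k = i <;>
      simp [corr, rowFun, hj, hk] <;> by_cases h2 : i < k <;> simp [h2] <;> ring
  simp only [genS, add_mul, mul_add, one_mul, mul_one, corr_mul_corr]
  rw [add_assoc, ← add_assoc (corr n A sg i), hc]
  simp

lemma artinGenPow_eq (hs : ∀ i, s i = 1 ∨ s i = -1) (i : Fin n) :
    artinGenPow n A s i = genS n A (s i) i := by
  rcases hs i with h | h
  · rw [artinGenPow, if_pos h, artinGen_eq, h]
  · rw [artinGenPow, if_neg (by rw [h]; norm_num), artinGen_eq]
    rw [Matrix.inv_eq_right_inv (B := genS n A (-1) i) (by simpa using genS_mul_genS n A 1 i), h]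

/-- The intermediate matrix: rows `< m` of `Uᵀ`, remaining rows of `U`. -/
def Mk (m : ℕ) : Matrix (Fin n) (Fin n) ℝ :=
  fun i j => if (i : ℕ) < m then (Umat n A s)ᵀ i j else Umat n A s i j

lemma Mk_zero : Mk n A s 0 = Umat n A s := by
  ext i j; simp [Mk]

lemma Mk_top : Mk n A s n = (Umat n A s)ᵀ := by
  refine Matrix.ext fun i j => ?_
  simp only [Mk, if_pos i.isLt]

lemma Umat_apply (i j : Fin n) :
    Umat n A s i j = (if i = j then s i else 0) - (if i < j then A i j else 0) := by
  simp [Umat, Aplus, Matrix.diagonal, Matrix.sub_apply]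

lemma Mk_col (k : Fin n) (i : Fin n) :
    Mk n A s k i k = if i = k then s k else 0 := by
  rcases lt_trichotomy i k with h | h | h
  · have h' : (i : ℕ) < (k : ℕ) := h
    simp only [Mk, if_pos h', Matrix.transpose_apply, Umat_apply]
    have : ¬ (k = i) := by intro e; subst e; exact lt_irrefl _ h
    have : ¬ (k < i) := by exact not_lt_of_gt h
    simp [‹¬ k = i›, this, if_neg (ne_of_lt h)]
  · subst h
    simp [Mk, Umat_apply]
  · have h' : ¬ ((i : ℕ) < (k : ℕ)) := not_lt_of_gt h
    simp only [Mk, if_neg h', Umat_apply]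
    have : ¬ (i = k) := ne_of_gt h
    have : ¬ (i < k) := not_lt_of_gt h
    simp [‹¬ i = k›, this, if_neg (Ne.symm (ne_of_lt h))]

lemma step (hsym : ∀ i j, A i j = A j i) (hs : ∀ i, s i = 1 ∨ s i = -1) (k : Fin n) :
    Mk n A s k * genS n A (s k) k = Mk n A s ((k : ℕ) + 1) := by
  have hss : s k * s k = 1 := by rcases hs k with h | h <;> rw [h] <;> norm_num
  have hMC : Mk n A s k * corr n A (s k) k =
      fun i j => if i = k then s k * rowFun n A (s k) k j else 0 := by
    ext i j
    simp only [Matrix.mul_apply, corr]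
    rw [show (∑ l, Mk n A s (↑k) i l * if l = k then rowFun n A (s k) k j else 0)
        = ∑ l, (if l = k then Mk n A s (↑k) i l * rowFun n A (s k) k j else 0) by
      apply Finset.sum_congr rfl; intro l _; split <;> simp]
    rw [Finset.sum_ite_eq']
    simp [Mk_col, ite_mul, zero_mul]
  rw [genS, mul_add, mul_one, hMC]
  ext i j
  show Mk n A s (k : ℕ) i j + (if i = k then s k * rowFun n A (s k) k j else 0) = Mk n A s ((k : ℕ) + 1) i j
  by_cases hi : i = k
  · subst hi
    have h1 : ¬ ((i : ℕ) < (i : ℕ)) := lt_irrefl _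
    have h2 : (i : ℕ) < (i : ℕ) + 1 := Nat.lt_succ_self _
    simp only [Mk, if_neg h1, if_pos h2, if_pos rfl, Matrix.transpose_apply]
    rw [Umat_apply, Umat_apply]
    simp only [rowFun]
    rcases lt_trichotomy i j with h | h | h
    · have h1' : ¬ (i = j) := ne_of_lt h
      have h2' : ¬ (j = i) := fun e => h1' e.symm
      have h3' : ¬ (j < i) := not_lt_of_gt h
      simp only [if_neg h1', if_neg h2', if_neg h3', if_pos h, if_true]
      linear_combination A i j * hss
    · subst h; simp
    · have h1' : ¬ (i = j) := ne_of_gt h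
      have h2' : ¬ (j = i) := fun e => h1' e.symm
      have h3' : ¬ (i < j) := not_lt_of_gt h
      simp only [if_neg h1', if_neg h2', if_neg h3', if_pos h, if_true]
      linear_combination (-(A i j)) * hss - hsym i j
  · have : ((i : ℕ) < (k : ℕ)) ↔ ((i : ℕ) < (k : ℕ) + 1) := by
      constructor
      · omega
      · intro h
        rcases Nat.lt_succ_iff_lt_or_eq.mp h with h | h
        · exact h
        · exact absurd (Fin.ext h) hi
    simp only [Mk, if_neg hi, add_zero]
    by_cases h : (i : ℕ) < (k : ℕ)
    · rw [if_pos h, if_pos (this.mp h)]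
    · rw [if_neg h, if_neg (fun h' => h (this.mpr h'))]

lemma main_ind (hsym : ∀ i j, A i j = A j i) (hs : ∀ i, s i = 1 ∨ s i = -1) :
    ∀ m, m ≤ n →
      Umat n A s * (((List.finRange n).take m).map (artinGenPow n A s)).prod
        = Mk n A s m := by
  intro m
  induction m with
  | zero => intro _; simp [Mk_zero]
  | succ m ih =>
    intro hm
    have hm' : m < n := hm
    have hget : (List.finRange n)[m]? = some ⟨m, hm'⟩ := by
      rw [List.getElem?_eq_getElem (by simpa using hm')]
      simp [List.getElem_finRange, Fin.cast]
    rw [List.take_succ, hget]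
    simp only [Option.toList_some, List.map_append, List.map_cons, List.map_nil,
      List.prod_append, List.prod_cons, List.prod_nil, mul_one, ← mul_assoc]
    rw [ih (le_of_lt hm'), artinGenPow_eq n A s hs]
    exact step n A s hsym hs ⟨m, hm'⟩

lemma det_Umat_ne_zero (hs : ∀ i, s i = 1 ∨ s i = -1) : (Umat n A s).det ≠ 0 := by
  have hbt : (Umat n A s).BlockTriangular id := by
    intro i j h
    have h' : j < i := h
    rw [Umat_apply]
    simp [ne_of_gt h', not_lt_of_gt h', if_neg (Ne.symm (ne_of_lt h'))]
  rw [Matrix.det_of_upperTriangular hbt]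
  apply Finset.prod_ne_zero_iff.mpr
  intro i _
  rw [Umat_apply]
  simp only [if_pos rfl, lt_irrefl, if_neg (lt_irrefl i), sub_zero]
  rcases hs i with h | h <;> rw [h] <;> norm_num

end Stmt2Aux

theorem stmt_2 (n : ℕ) (hn : 1 ≤ n) (A : Matrix (Fin n) (Fin n) ℝ)
    (hsym : ∀ i j, A i j = A j i) (hdiag : ∀ i, A i i = 0)
    (h01 : ∀ i j, A i j = 0 ∨ A i j = 1)
    (s : Fin n → ℝ) (hs : ∀ i, s i = 1 ∨ s i = -1) :
    ((List.finRange n).map (artinGenPow n A s)).prod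
      = (Umat n A s)⁻¹ * (Umat n A s)ᵀ := by
  have hmain := Stmt2Aux.main_ind n A s hsym hs n le_rfl
  rw [List.take_of_length_le (by simp), Stmt2Aux.Mk_top] at hmain
  have hdet : IsUnit (Umat n A s).det :=
    isUnit_iff_ne_zero.mpr (Stmt2Aux.det_Umat_ne_zero n A s hs)
  calc ((List.finRange n).map (artinGenPow n A s)).prod
      = (Umat n A s)⁻¹ * (Umat n A s) *
        ((List.finRange n).map (artinGenPow n A s)).prod := by
        rw [Matrix.nonsing_inv_mul _ hdet, one_mul]
    _ = (Umat n A s)⁻¹ * (Umat n A s)ᵀ := by rw [mul_assoc, hmain]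

end
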